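/- Let q ∈ (0,1), τ, δ ∈ ℝ with τ² − 4δ < 0 and τ ≥ 0. The complex roots λ± = (τ ± i√(4δ−τ²))/2 of λ² − τλ + δ = 0 satisfy |arg(λ±)| > qπ/2 if and only if 4δ > τ²·sec²(qπ/2). -/

import Mathlib

open Real Complex

theorem complex_roots_arg (q τ δ : ℝ) (hq0 : 0 < q) (hq1 : q < 1)
    (hdisc : τ ^ 2 - 4 * δ < 0) (hτ : τ ≥ 0)
    (lp lm : ℂ)
    (hlp : lp = (↑τ + Complex.I * Real.sqrt (4 * δ - τ ^ 2)) / 2)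
    (hlm : lm = (↑τ - Complex.I * Real.sqrt (4 * δ - τ ^ 2)) / 2) :
    (|lp.arg| > q * π / 2 ∧ |lm.arg| > q * π / 2) ↔
      4 * δ > τ ^ 2 * (1 / Real.cos (q * π / 2)) ^ 2 := by
  have hπ := Real.pi_pos
  set s := Real.sqrt (4 * δ - τ ^ 2) with hs
  have hspos : 0 < s := Real.sqrt_pos.mpr (by linarith)
  have hs2 : s ^ 2 = 4 * δ - τ ^ 2 := Real.sq_sqrt (by linarith)
  have hlpre : lp.re = τ / 2 := by simp [hlp]
  have hlpim : lp.im = s / 2 := by simp [hlp]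
  have hqlt : q * π / 2 < π / 2 := by nlinarith
  have hqpos : 0 < q * π / 2 := by positivity
  have hcos : 0 < Real.cos (q * π / 2) :=
    Real.cos_pos_of_mem_Ioo ⟨by linarith, hqlt⟩
  have hconj : lm = (starRingEnd ℂ) lp := by
    rw [hlp, hlm]
    simp only [map_div₀, map_add, map_mul, Complex.conj_I, Complex.conj_ofReal, map_ofNat]
    ring
  have habs : |lm.arg| = |lp.arg| := by
    rw [hconj, Complex.arg_conj]
    split_ifs with h <;> simp [h]
  rw [habs, and_self]
  have hargpos : 0 < lp.arg := by
    rcases (Complex.arg_nonneg_iff.mpr (by rw [hlpim]; positivity)).lt_or_eq with h | h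
    · exact h
    · exfalso
      have := Complex.arg_eq_zero_iff.mp h.symm
      rw [hlpim] at this; nlinarith [this.2]
  rcases eq_or_lt_of_le hτ with h0 | hτpos
  · -- τ = 0
    have hargp : lp.arg = π / 2 := by
      rw [Complex.arg_eq_pi_div_two_iff]
      refine ⟨by rw [hlpre, ← h0]; ring, by rw [hlpim]; linarith⟩
    rw [hargp, abs_of_pos (by linarith)]
    constructor
    · intro _; rw [← h0]; nlinarith
    · intro _; linarith
  · -- τ > 0
    have harglt : lp.arg < π / 2 :=
      Complex.arg_lt_pi_div_two_iff.mpr (Or.inl (by rw [hlpre]; linarith))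
    have hargeq : lp.arg = Real.arctan (s / τ) := by
      have ht : Real.tan lp.arg = s / τ := by
        rw [Complex.tan_arg, hlpim, hlpre]
        field_simp
      rw [← ht, Real.arctan_tan (by linarith) harglt]
    rw [abs_of_pos hargpos, hargeq]
    have key : q * π / 2 < Real.arctan (s / τ) ↔ Real.tan (q * π / 2) < s / τ := by
      constructor
      · intro h
        have := Real.tan_lt_tan_of_lt_of_lt_pi_div_two (by linarith)
          (Real.arctan_lt_pi_div_two _) h
        rwa [Real.tan_arctan] at this
      · intro h
        have := Real.arctan_strictMono h
        rwa [Real.arctan_tan (by linarith) hqlt] at this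
    rw [gt_iff_lt, key]
    have htan0 : 0 ≤ Real.tan (q * π / 2) := by
      rw [Real.tan_eq_sin_div_cos]
      exact div_nonneg (Real.sin_nonneg_of_nonneg_of_le_pi (by linarith) (by linarith)) hcos.le
    have hsec : (1 / Real.cos (q * π / 2)) ^ 2 = 1 + Real.tan (q * π / 2) ^ 2 := by
      rw [div_pow, one_pow, Real.tan_eq_sin_div_cos, div_pow]
      field_simp
      linarith [Real.cos_sq_add_sin_sq (q * π / 2)]
    rw [hsec, lt_div_iff₀ hτpos]
    constructor
    · intro h
      have h2 : (Real.tan (q * π / 2) * τ) ^ 2 < s ^ 2 := by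
        have h0 : 0 ≤ Real.tan (q * π / 2) * τ := by positivity
        nlinarith
      nlinarith
    · intro h
      have h2 : (Real.tan (q * π / 2) * τ) ^ 2 < s ^ 2 := by nlinarith
      exact lt_of_pow_lt_pow_left₀ 2 hspos.le h2
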